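/- arXiv:0904.2101 — 11 statements merged into one kernel-verified Lean document; each statement's English description precedes it below -/
import Mathlib

section
/- For every positive integer n, the 2-adic valuation of ((2n-1)!! + (-1)^((n-1)(n-2)/2)) equals 1 + v_2(n), i.e., the number ((2n-1)!! + (-1)^((n-1)(n-2)/2))/2 has the same 2-adic valuation as n. -/
open Finset

private def DD (n : ℕ) : ℤ := ∏ i ∈ Finset.range n, (2 * (i : ℤ) + 1)

private def EE (n : ℕ) : ℤ := if n % 4 = 0 ∨ n % 4 = 3 then -1 else 1

private lemma val2 (n k : ℕ) (h1 : 2^k ∣ n) (h2 : ¬ 2^(k+1) ∣ n) : padicValNat 2 n = k := by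
  haveI : Fact (Nat.Prime 2) := ⟨Nat.prime_two⟩
  have hn : n ≠ 0 := by rintro rfl; exact h2 (dvd_zero _)
  have hle : k ≤ padicValNat 2 n := ((padicValNat_dvd_iff k n).mp h1).resolve_left hn
  have hlt : padicValNat 2 n < k + 1 := by
    by_contra h
    exact h2 ((padicValNat_dvd_iff (k+1) n).mpr (Or.inr (by omega)))
  omega

private lemma eps_eq (n : ℕ) (hn : 1 ≤ n) :
    ((-1 : ℤ)) ^ ((n - 1) * (n - 2) / 2) = EE n := by
  obtain ⟨q, r, hr, rfl⟩ : ∃ q r, r < 4 ∧ n = 4 * q + r :=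
    ⟨n / 4, n % 4, Nat.mod_lt _ (by norm_num), by omega⟩
  interval_cases r
  · -- n = 4q, q ≥ 1
    obtain ⟨p, rfl⟩ : ∃ p, q = p + 1 := ⟨q - 1, by omega⟩
    have e1 : 4 * (p+1) + 0 - 1 = 4*p+3 := by omega
    have e2 : 4 * (p+1) + 0 - 2 = 4*p+2 := by omega
    have e3 : (4*p+3) * (4*p+2) = ((4*p+3)*(2*p+1))*2 := by ring
    rw [e1, e2, e3, Nat.mul_div_cancel _ (by norm_num)]
    rw [Odd.neg_one_pow (Odd.mul (by exact Nat.odd_iff.mpr (by omega)) (by exact Nat.odd_iff.mpr (by omega)))]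
    simp [EE, Nat.add_mul_mod_self_left]
  · -- n = 4q+1
    have e1 : 4 * q + 1 - 1 = 4*q := by omega
    have e3 : (4*q) * (4*q+1-2) = (2*q*(4*q+1-2))*2 := by ring
    rw [e1, e3, Nat.mul_div_cancel _ (by norm_num)]
    rw [Even.neg_one_pow ⟨q*(4*q+1-2), by ring⟩]
    have : (4*q+1) % 4 = 1 := by omega
    simp [EE, this]
  · -- n = 4q+2
    have e1 : 4 * q + 2 - 1 = 4*q+1 := by omega
    have e2 : 4 * q + 2 - 2 = 4*q := by omega
    have e3 : (4*q+1) * (4*q) = ((4*q+1)*(2*q))*2 := by ring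
    rw [e1, e2, e3, Nat.mul_div_cancel _ (by norm_num)]
    rw [Even.neg_one_pow ⟨(4*q+1)*q, by ring⟩]
    have : (4*q+2) % 4 = 2 := by omega
    simp [EE, this]
  · -- n = 4q+3
    have e1 : 4 * q + 3 - 1 = 4*q+2 := by omega
    have e2 : 4 * q + 3 - 2 = 4*q+1 := by omega
    have e3 : (4*q+2) * (4*q+1) = ((2*q+1)*(4*q+1))*2 := by ring
    rw [e1, e2, e3, Nat.mul_div_cancel _ (by norm_num)]
    rw [Odd.neg_one_pow (Odd.mul (by exact Nat.odd_iff.mpr (by omega)) (by exact Nat.odd_iff.mpr (by omega)))]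
    have : (4*q+3) % 4 = 3 := by omega
    simp [EE, this]

private lemma EE_period (k : ℕ) (j : ℕ) : EE (k + 4*j) = EE k := by
  simp [EE, Nat.add_mul_mod_self_left]

private lemma sum_odds (R : Type*) [CommRing R] (m : ℕ) :
    (∑ j ∈ range m, (2*(j:R)+1)) = (m:R)^2 := by
  induction m with
  | zero => simp
  | succ k ih => rw [Finset.sum_range_succ, ih]; push_cast; ring

private lemma lemA (m : ℕ) (hm : 4 ∣ m) :
    (8:ℤ) ∣ ∑ j ∈ range m, ∏ i ∈ (range m).erase j, (2*(i:ℤ)+1) := by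
  have key : ((∑ j ∈ range m, ∏ i ∈ (range m).erase j, (2*(i:ℤ)+1) : ℤ) : ZMod 8) = 0 := by
    push_cast
    have step : ∀ j ∈ range m, (∏ i ∈ (range m).erase j, (2*(i:ZMod 8)+1))
        = (∏ i ∈ range m, (2*(i:ZMod 8)+1)) * (2*(j:ZMod 8)+1) := by
      intro j hj
      have h1 : (2*(j:ZMod 8)+1)^2 = 1 := by
        have : ∀ a : ZMod 8, (2*a+1)^2 = 1 := by decide
        exact this _
      have h2 := Finset.mul_prod_erase (range m) (fun i => 2*(i:ZMod 8)+1) hj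
      calc ∏ i ∈ (range m).erase j, (2*(i:ZMod 8)+1)
          = ((2*(j:ZMod 8)+1) * ∏ i ∈ (range m).erase j, (2*(i:ZMod 8)+1)) * (2*(j:ZMod 8)+1) := by
            rw [mul_comm (2*(j:ZMod 8)+1), mul_assoc, ← sq, h1, mul_one]
        _ = (∏ i ∈ range m, (2*(i:ZMod 8)+1)) * (2*(j:ZMod 8)+1) := by rw [h2]
    rw [Finset.sum_congr rfl step, ← Finset.mul_sum, sum_odds]
    obtain ⟨t, rfl⟩ := hm
    push_cast
    have h3 : ((4:ZMod 8)*t)^2 = 8 * (2*t^2) := by ring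
    rw [h3, show (8 : ZMod 8) = 0 from rfl, zero_mul, mul_zero]
  exact (ZMod.intCast_zmod_eq_zero_iff_dvd _ 8).mp key

private lemma expand (c : ℤ) (f : ℕ → ℤ) (s : Finset ℕ) :
    ∃ r : ℤ, ∏ j ∈ s, (c + f j) =
      ∏ j ∈ s, f j + c * (∑ j ∈ s, ∏ i ∈ s.erase j, f i) + c^2 * r := by
  induction s using Finset.induction_on with
  | empty => exact ⟨0, by simp⟩
  | @insert a s ha ih =>
    obtain ⟨r, hr⟩ := ih
    refine ⟨f a * r + (∑ j ∈ s, ∏ i ∈ s.erase j, f i) + c * r, ?_⟩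
    rw [prod_insert ha, hr, prod_insert ha, sum_insert ha, erase_insert ha]
    have h2 : ∑ j ∈ s, ∏ i ∈ (insert a s).erase j, f i
        = ∑ j ∈ s, f a * ∏ i ∈ s.erase j, f i := by
      apply Finset.sum_congr rfl
      intro j hj
      rw [Finset.erase_insert_of_ne (by rintro rfl; exact ha hj),
        prod_insert (fun h => ha (Finset.erase_subset _ _ h))]
    rw [h2, ← Finset.mul_sum]
    ring

private lemma doubling (m : ℕ) (hm : 4 ∣ m) (hm0 : m ≠ 0) :
    (2:ℤ)^(padicValNat 2 m + 4) ∣ DD (2*m) - (DD m)^2 := by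
  haveI : Fact (Nat.Prime 2) := ⟨Nat.prime_two⟩
  set v := padicValNat 2 m with hv
  have hv2 : 2 ≤ v := by
    have := ((padicValNat_dvd_iff 2 m).mp (show 2^2 ∣ m by norm_num; exact hm)).resolve_left hm0
    omega
  obtain ⟨u, hu⟩ : 2^v ∣ m := pow_padicValNat_dvd
  have hsplit : DD (2*m) = DD m * ∏ j ∈ range m, ((2*(m:ℤ)) + (2*(j:ℤ)+1)) := by
    rw [DD, two_mul, Finset.prod_range_add]
    congr 1
    apply Finset.prod_congr rfl
    intro j _
    push_cast
    ring
  obtain ⟨r, hr⟩ := expand (2*(m:ℤ)) (fun j => 2*(j:ℤ)+1) (range m)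
  obtain ⟨s, hs⟩ := lemA m hm
  have hcs : (2:ℤ)^(v+4) ∣ (2*(m:ℤ)) * (∑ j ∈ range m, ∏ i ∈ (range m).erase j, (2*(i:ℤ)+1)) := by
    rw [hs]
    refine ⟨(u:ℤ)*s, ?_⟩
    have : (m:ℤ) = 2^v * u := by exact_mod_cast congrArg (Nat.cast : ℕ → ℤ) hu
    rw [this, pow_add]
    push_cast
    ring
  have hc2 : (2:ℤ)^(v+4) ∣ (2*(m:ℤ))^2 * r := by
    refine Dvd.dvd.mul_right ?_ r
    have h1 : (2:ℤ)^(v+4) ∣ (2:ℤ)^(2*v+2) := pow_dvd_pow 2 (by omega)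
    refine h1.trans ⟨(u:ℤ)^2, ?_⟩
    have : (m:ℤ) = 2^v * u := by exact_mod_cast congrArg (Nat.cast : ℕ → ℤ) hu
    rw [this]
    ring
  have : DD (2*m) - (DD m)^2 = DD m * ((2*(m:ℤ)) * (∑ j ∈ range m, ∏ i ∈ (range m).erase j, (2*(i:ℤ)+1)) + (2*(m:ℤ))^2 * r) := by
    rw [hsplit, hr]
    rw [show (∏ j ∈ range m, (2*(j:ℤ)+1)) = DD m from rfl]
    ring
  rw [this]
  exact Dvd.dvd.mul_left (dvd_add hcs hc2) _

private lemma per4 (k : ℕ) : (8:ℤ) ∣ (∏ i ∈ range 4, (2*(((k+i:ℕ)):ℤ)+1)) - 1 := by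
  have h : ∀ a : ZMod 8, (∏ i ∈ range 4, (2*(a+(i:ZMod 8))+1)) = 1 := by decide
  have h2 : ((((∏ i ∈ range 4, (2*(((k+i:ℕ)):ℤ)+1)) - 1 : ℤ)) : ZMod 8) = 0 := by
    push_cast
    rw [h (k : ZMod 8)]
    ring
  exact (ZMod.intCast_zmod_eq_zero_iff_dvd _ 8).mp h2

private lemma split4 (k : ℕ) : DD (k + 4) = DD k * ∏ i ∈ range 4, (2*(((k+i:ℕ)):ℤ)+1) := by
  rw [DD, DD, Finset.prod_range_add]

private lemma per8 (k : ℕ) : (16:ℤ) ∣ (∏ i ∈ range 8, (2*(((k+i:ℕ)):ℤ)+1)) - 1 := by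
  have h : ∀ a : ZMod 16, (∏ i ∈ range 8, (2*(a+(i:ZMod 16))+1)) = 1 := by decide
  have h2 : ((((∏ i ∈ range 8, (2*(((k+i:ℕ)):ℤ)+1)) - 1 : ℤ)) : ZMod 16) = 0 := by
    push_cast
    rw [h (k : ZMod 16)]
    ring
  exact (ZMod.intCast_zmod_eq_zero_iff_dvd _ 16).mp h2

private lemma split8 (k : ℕ) : DD (k + 8) = DD k * ∏ i ∈ range 8, (2*(((k+i:ℕ)):ℤ)+1) := by
  rw [DD, DD, Finset.prod_range_add]

private lemma per16 (k : ℕ) : (32:ℤ) ∣ (∏ i ∈ range 16, (2*(((k+i:ℕ)):ℤ)+1)) - 1 := by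
  have h : ∀ a : ZMod 32, (∏ i ∈ range 16, (2*(a+(i:ZMod 32))+1)) = 1 := by decide
  have h2 : ((((∏ i ∈ range 16, (2*(((k+i:ℕ)):ℤ)+1)) - 1 : ℤ)) : ZMod 32) = 0 := by
    push_cast
    rw [h (k : ZMod 32)]
    ring
  exact (ZMod.intCast_zmod_eq_zero_iff_dvd _ 32).mp h2

private lemma split16 (k : ℕ) : DD (k + 16) = DD k * ∏ i ∈ range 16, (2*(((k+i:ℕ)):ℤ)+1) := by
  rw [DD, DD, Finset.prod_range_add]

private lemma key : ∀ n : ℕ, 1 ≤ n → (2:ℤ)^(padicValNat 2 n + 3) ∣ DD n - (2*(n:ℤ) - EE n) := by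
  intro n
  induction n using Nat.strong_induction_on with
  | _ n IH =>
  intro hn
  haveI : Fact (Nat.Prime 2) := ⟨Nat.prime_two⟩
  by_cases h2 : n % 2 = 1
  · -- v₂(n) = 0, modulus 8, period 4
    have hval : padicValNat 2 n = 0 := val2 n 0 (one_dvd n) (by simp only [zero_add, pow_one]; omega)
    rw [hval, show ((2:ℤ)^(0+3)) = 8 by norm_num]
    by_cases h5 : n < 5
    · interval_cases n
      · norm_num [DD, EE, Finset.prod_range_succ]
      · omega
      · norm_num [DD, EE, Finset.prod_range_succ]
      · omega
    · obtain ⟨k, rfl⟩ : ∃ k, n = k + 4 := ⟨n - 4, by omega⟩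
      have IHk := IH k (by omega) (by omega)
      rw [val2 k 0 (one_dvd k) (by simp only [zero_add, pow_one]; omega),
        show ((2:ℤ)^(0+3)) = 8 by norm_num] at IHk
      have hEE : EE (k+4) = EE k := by simp [EE, Nat.add_mod_right]
      have hid : DD (k+4) - (2*((k+4:ℕ):ℤ) - EE (k+4)) =
          DD k * ((∏ i ∈ range 4, (2*(((k+i:ℕ)):ℤ)+1)) - 1)
            + (DD k - (2*(k:ℤ) - EE k)) - 8 := by
        rw [split4, hEE]; push_cast; ring
      rw [hid]
      exact dvd_sub (dvd_add (Dvd.dvd.mul_left (per4 k) _) IHk) (by norm_num)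
  · by_cases h4 : n % 4 = 2
    · -- v₂(n) = 1, modulus 16, period 8
      have hval : padicValNat 2 n = 1 :=
        val2 n 1 (by simp only [zero_add, pow_one]; omega) (by norm_num; omega)
      rw [hval, show ((2:ℤ)^(1+3)) = 16 by norm_num]
      by_cases h5 : n < 10
      · have : n = 2 ∨ n = 6 := by omega
        rcases this with rfl | rfl
        · norm_num [DD, EE, Finset.prod_range_succ]
        · norm_num [DD, EE, Finset.prod_range_succ]
      · obtain ⟨k, rfl⟩ : ∃ k, n = k + 8 := ⟨n - 8, by omega⟩
        have IHk := IH k (by omega) (by omega)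
        rw [val2 k 1 (by simp only [zero_add, pow_one]; omega) (by norm_num; omega),
          show ((2:ℤ)^(1+3)) = 16 by norm_num] at IHk
        have hEE : EE (k+8) = EE k := by
          have : (k+8) % 4 = k % 4 := by omega
          simp [EE, this]
        have hid : DD (k+8) - (2*((k+8:ℕ):ℤ) - EE (k+8)) =
            DD k * ((∏ i ∈ range 8, (2*(((k+i:ℕ)):ℤ)+1)) - 1)
              + (DD k - (2*(k:ℤ) - EE k)) - 16 := by
          rw [split8, hEE]; push_cast; ring
        rw [hid]
        exact dvd_sub (dvd_add (Dvd.dvd.mul_left (per8 k) _) IHk) (by norm_num)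
    · by_cases h8 : n % 8 = 4
      · -- v₂(n) = 2, modulus 32, period 16
        have hval : padicValNat 2 n = 2 :=
          val2 n 2 (by norm_num; omega) (by norm_num; omega)
        rw [hval, show ((2:ℤ)^(2+3)) = 32 by norm_num]
        by_cases h5 : n < 20
        · have : n = 4 ∨ n = 12 := by omega
          rcases this with rfl | rfl
          · norm_num [DD, EE, Finset.prod_range_succ]
          · norm_num [DD, EE, Finset.prod_range_succ]
        · obtain ⟨k, rfl⟩ : ∃ k, n = k + 16 := ⟨n - 16, by omega⟩
          have IHk := IH k (by omega) (by omega)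
          rw [val2 k 2 (by norm_num; omega) (by norm_num; omega),
            show ((2:ℤ)^(2+3)) = 32 by norm_num] at IHk
          have hEE : EE (k+16) = EE k := by
            have : (k+16) % 4 = k % 4 := by omega
            simp [EE, this]
          have hid : DD (k+16) - (2*((k+16:ℕ):ℤ) - EE (k+16)) =
              DD k * ((∏ i ∈ range 16, (2*(((k+i:ℕ)):ℤ)+1)) - 1)
                + (DD k - (2*(k:ℤ) - EE k)) - 32 := by
            rw [split16, hEE]; push_cast; ring
          rw [hid]
          exact dvd_sub (dvd_add (Dvd.dvd.mul_left (per16 k) _) IHk) (by norm_num)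
      · -- 8 ∣ n : doubling case
        have h8' : n % 8 = 0 := by omega
        obtain ⟨m, rfl⟩ : ∃ m, n = 2 * m := ⟨n / 2, by omega⟩
        have hm4 : 4 ∣ m := by omega
        have hm0 : m ≠ 0 := by omega
        set v' := padicValNat 2 m with hv'
        obtain ⟨u, hu⟩ : 2^v' ∣ m := pow_padicValNat_dvd
        have hv2 : 2 ≤ v' := by
          have := ((padicValNat_dvd_iff 2 m).mp
            (show 2^2 ∣ m by norm_num; exact hm4)).resolve_left hm0
          omega
        have hval : padicValNat 2 (2*m) = v' + 1 := by
          refine val2 _ _ ⟨u, by rw [hu]; ring⟩ ?_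
          rintro ⟨c, hc⟩
          have h2m : 2*m = 2*(2^(v'+1)*c) := by rw [hc]; ring
          exact pow_succ_padicValNat_not_dvd (p := 2) hm0
            ⟨c, Nat.eq_of_mul_eq_mul_left (by norm_num) h2m⟩
        have IHm := IH m (by omega) (by omega)
        have hEm : EE m = -1 := by
          have : m % 4 = 0 := by omega
          simp [EE, this]
        rw [hEm, ← hv'] at IHm
        obtain ⟨t, ht⟩ := IHm
        have hEn : EE (2*m) = -1 := by
          have : (2*m) % 4 = 0 := by omega
          simp [EE, this]
        rw [hval, hEn]
        have hDm : DD m = 2*(m:ℤ)+1 + 2^(v'+3)*t := by linarith [ht]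
        have hmz : (m:ℤ) = 2^v' * u := by exact_mod_cast congrArg (Nat.cast : ℕ → ℤ) hu
        have hm2 : (2:ℤ)^(v'+4) ∣ 4*(m:ℤ)^2 := by
          have h1 : (2:ℤ)^(v'+4) ∣ (2:ℤ)^(2*v'+2) := pow_dvd_pow 2 (by omega)
          exact h1.trans ⟨(u:ℤ)^2, by rw [hmz]; ring⟩
        have hq : DD m ^ 2 - (4*(m:ℤ)+1) =
            4*(m:ℤ)^2 + (2:ℤ)^(v'+4)*(t*(2*(m:ℤ)+1)) + (2:ℤ)^(v'+4)*(2^(v'+2)*t^2) := by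
          rw [hDm]; ring
        have hsq : (2:ℤ)^(v'+4) ∣ DD m^2 - (4*(m:ℤ)+1) := by
          rw [hq]
          exact dvd_add (dvd_add hm2 ⟨_, rfl⟩) ⟨_, rfl⟩
        have hdbl := doubling m hm4 hm0
        rw [← hv'] at hdbl
        have final : DD (2*m) - (2*((2*m:ℕ):ℤ) - (-1)) =
            (DD (2*m) - DD m^2) + (DD m^2 - (4*(m:ℤ)+1)) := by
          push_cast; ring
        rw [show v' + 1 + 3 = v' + 4 by omega, final]
        exact dvd_add hdbl hsq

/-- For every positive integer `n`, the 2-adic valuation of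
`(2n-1)!! + (-1)^((n-1)(n-2)/2)` equals `1 + v₂(n)`, where
`(2n-1)!! = ∏ i < n, (2i+1)`. -/
theorem stmt0 (n : ℕ) (hn : 1 ≤ n) :
    padicValInt 2 ((∏ i ∈ Finset.range n, (2 * (i : ℤ) + 1)) +
      (-1) ^ ((n - 1) * (n - 2) / 2)) = 1 + padicValNat 2 n := by
  haveI : Fact (Nat.Prime 2) := ⟨Nat.prime_two⟩
  have hkey := key n hn
  rw [eps_eq n hn]
  show padicValInt 2 (DD n + EE n) = 1 + padicValNat 2 n
  set v := padicValNat 2 n with hv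
  obtain ⟨u, hu⟩ : 2^v ∣ n := pow_padicValNat_dvd
  have hnd : ¬ 2^(v+1) ∣ n := pow_succ_padicValNat_not_dvd (p := 2) (by omega)
  have hnz : (n:ℤ) = 2^v*u := by exact_mod_cast congrArg (Nat.cast : ℕ → ℤ) hu
  have hX : DD n + EE n = (DD n - (2*(n:ℤ) - EE n)) + 2*(n:ℤ) := by ring
  have h1 : (2:ℤ)^(v+1) ∣ DD n + EE n := by
    rw [hX]
    exact dvd_add (dvd_trans (pow_dvd_pow 2 (by omega)) hkey) ⟨(u:ℤ), by rw [hnz]; ring⟩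
  have h2 : ¬ (2:ℤ)^(v+2) ∣ DD n + EE n := by
    intro hcon
    have hd := dvd_sub hcon (dvd_trans (pow_dvd_pow 2 (by omega)) hkey)
    have e : DD n + EE n - (DD n - (2*(n:ℤ) - EE n)) = 2*(n:ℤ) := by ring
    rw [e] at hd
    have hdn : (2:ℕ)^(v+2) ∣ 2*n := by exact_mod_cast hd
    obtain ⟨c, hc⟩ := hdn
    have h2m : 2*n = 2*(2^(v+1)*c) := by rw [hc]; ring
    exact hnd ⟨c, Nat.eq_of_mul_eq_mul_left (by norm_num) h2m⟩
  have hXne : DD n + EE n ≠ 0 := fun h => h2 (by rw [h]; exact dvd_zero _)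
  have hle : v+1 ≤ padicValInt 2 (DD n + EE n) :=
    ((padicValInt_dvd_iff (v+1) _).mp h1).resolve_left hXne
  have hlt : ¬ (v+2 ≤ padicValInt 2 (DD n + EE n)) :=
    fun h => h2 ((padicValInt_dvd_iff (v+2) _).mpr (Or.inr h))
  omega
end

section
/- For every integer k ≥ 1, the 2-adic valuation of (16k-9)!! - 1 equals 3. -/
lemma prodmod16 (k : ℕ) : (∏ i ∈ Finset.range (8 * k + 4), (2 * i + 1)) % 16 = 9 := by
  induction k with
  | zero => decide
  | succ k ih =>
    have h : 8 * (k + 1) + 4 = (8 * k + 4) + 8 := by ring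
    rw [h, Finset.prod_range_add, Nat.mul_mod, ih, Finset.prod_nat_mod]
    have h2 : ∀ j ∈ Finset.range 8,
        (2 * ((8 * k + 4) + j) + 1) % 16 = (2 * j + 9) % 16 := by
      intro j _; omega
    rw [Finset.prod_congr rfl h2]
    decide

/-- For every `k ≥ 1`, `v₂((16k-9)!! - 1) = 3`, where
`(16k-9)!! = (2(8k-4)-1)!! = ∏ i < 8k-4, (2i+1)`. -/
theorem stmt1 (k : ℕ) (hk : 1 ≤ k) :
    padicValNat 2 ((∏ i ∈ Finset.range (8 * k - 4), (2 * i + 1)) - 1) = 3 := by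
  have hm : 8 * k - 4 = 8 * (k - 1) + 4 := by omega
  rw [hm]
  have hp := prodmod16 (k - 1)
  set P := ∏ i ∈ Finset.range (8 * (k - 1) + 4), (2 * i + 1) with hP
  have hx : (P - 1) % 16 = 8 := by omega
  have hne : P - 1 ≠ 0 := by omega
  have h8 : 2 ^ 3 ∣ P - 1 := by omega
  have h16 : ¬ 2 ^ 4 ∣ P - 1 := by omega
  have h1 : 3 ≤ padicValNat 2 (P - 1) :=
    ((padicValNat_dvd_iff_le hne).mp h8)
  have h2 : ¬ 4 ≤ padicValNat 2 (P - 1) := fun h =>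
    h16 ((padicValNat_dvd_iff_le hne).mpr h)
  omega
end

section
/- The sequence defined by x_1 = 3 and, for n ≥ 2, x_n being the smallest integer greater than x_{n-1} with v_2(x_n) = v_2(n), satisfies x_{2^t} = 3·2^t for every t ≥ 0. -/
private lemma val2_eq {m v : ℕ} (hm : m ≠ 0) (hd : 2 ^ v ∣ m) (hnd : ¬ 2 ^ (v + 1) ∣ m) :
    padicValNat 2 m = v := by
  haveI : Fact (Nat.Prime 2) := ⟨Nat.prime_two⟩
  have h1 : v ≤ padicValNat 2 m := (padicValNat_dvd_iff_le hm).mp hd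
  have h2 : ¬ v + 1 ≤ padicValNat 2 m := fun h => hnd ((padicValNat_dvd_iff_le hm).mpr h)
  omega

private lemma val2_le_log {n : ℕ} (hn : n ≠ 0) : padicValNat 2 n ≤ Nat.log 2 n := by
  have h : 2 ^ padicValNat 2 n ≤ n := Nat.le_of_dvd (Nat.pos_of_ne_zero hn) pow_padicValNat_dvd
  exact Nat.le_log_of_pow_le one_lt_two h

private lemma key_val {n : ℕ} (hn : n ≠ 0) :
    padicValNat 2 (n + 2 ^ (Nat.log 2 n + 1)) = padicValNat 2 n := by
  set v := padicValNat 2 n with hv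
  have hvle : v ≤ Nat.log 2 n := val2_le_log hn
  have hd : 2 ^ v ∣ n := pow_padicValNat_dvd
  haveI : Fact (Nat.Prime 2) := ⟨Nat.prime_two⟩
  have hnd : ¬ 2 ^ (v + 1) ∣ n := pow_succ_padicValNat_not_dvd hn
  have hdL : 2 ^ (v + 1) ∣ 2 ^ (Nat.log 2 n + 1) := pow_dvd_pow 2 (by omega)
  refine val2_eq (by positivity) (dvd_add hd (dvd_trans (pow_dvd_pow 2 (by omega)) hdL)) ?_
  intro h
  have h' : 2 ^ (v + 1) ∣ 2 ^ (Nat.log 2 n + 1) + n := by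
    rwa [Nat.add_comm n (2 ^ (Nat.log 2 n + 1))] at h
  exact hnd ((Nat.dvd_add_right hdL).mp h')

private lemma closed_form (x : ℕ → ℕ) (h1 : x 1 = 3)
    (hrec : ∀ n, 2 ≤ n →
      IsLeast {m : ℕ | x (n - 1) < m ∧ padicValNat 2 m = padicValNat 2 n} (x n)) :
    ∀ n, 1 ≤ n → x n = n + 2 ^ (Nat.log 2 n + 1) := by
  intro n hn
  induction n, hn using Nat.le_induction with
  | base => simpa using h1
  | succ n hn ih =>
    have ihn := ih
    set L := Nat.log 2 (n + 1) with hL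
    have hle : 2 ^ L ≤ n + 1 := Nat.pow_log_le_self 2 (by omega)
    have hlt : n + 1 < 2 ^ (L + 1) := Nat.lt_pow_succ_log_self one_lt_two _
    have hcand : x n < n + 1 + 2 ^ (L + 1) ∧
        padicValNat 2 (n + 1 + 2 ^ (L + 1)) = padicValNat 2 (n + 1) := by
      constructor
      · rw [ihn]
        rcases Nat.lt_or_ge n (2 ^ L) with h | h
        · -- n + 1 = 2 ^ L (power of two case) or n = 0
          have hLn : Nat.log 2 n ≤ L := Nat.log_mono_right (by omega)
          have : 2 ^ (Nat.log 2 n + 1) ≤ 2 ^ (L + 1) :=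
            Nat.pow_le_pow_right (by norm_num) (by omega)
          omega
        · have hlog : Nat.log 2 n = L := by
            apply Nat.log_eq_of_pow_le_of_lt_pow h (by omega)
          rw [hlog]; omega
      · exact key_val (by omega)
    have hleast := hrec (n + 1) (by omega)
    simp only [Nat.add_sub_cancel] at hleast
    have hxle : x (n + 1) ≤ n + 1 + 2 ^ (L + 1) := hleast.2 hcand
    -- lower bound: any element of the set is ≥ n + 1 + 2^(L+1)
    have hge : n + 1 + 2 ^ (L + 1) ≤ x (n + 1) := by
      obtain ⟨hgt, hval⟩ := hleast.1
      rcases Nat.lt_or_ge n (2 ^ L) with h | h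
      · -- n + 1 = 2 ^ L
        have hn1 : n + 1 = 2 ^ L := by omega
        have hL1 : 1 ≤ L := by
          by_contra h'
          interval_cases L <;> omega
        have hvn : padicValNat 2 (n + 1) = L := by
          rw [hn1]; haveI : Fact (Nat.Prime 2) := ⟨Nat.prime_two⟩
          simp [padicValNat.prime_pow]
        rw [hvn] at hval
        have hm0 : x (n + 1) ≠ 0 := by omega
        have hd : 2 ^ L ∣ x (n + 1) := hval ▸ pow_padicValNat_dvd
        haveI : Fact (Nat.Prime 2) := ⟨Nat.prime_two⟩
        have hnd : ¬ 2 ^ (L + 1) ∣ x (n + 1) := by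
          rw [← hval]; exact pow_succ_padicValNat_not_dvd hm0
        obtain ⟨c, hc⟩ := hd
        have hxprev : x n = 2 ^ (L + 1) - 1 := by
          have hlogn : Nat.log 2 n = L - 1 := by
            apply Nat.log_eq_of_pow_le_of_lt_pow
            · have : 2 ^ L = 2 * 2 ^ (L - 1) := by
                rw [← pow_succ']; congr 1; omega
              omega
            · have : 2 ^ (L - 1 + 1) = 2 ^ L := by congr 1; omega
              omega
          rw [ihn, hlogn]
          have : 2 ^ (L - 1 + 1) = 2 ^ L := by congr 1; omega
          omega
        -- x (n+1) > 2^(L+1) - 1, so x (n+1) ≥ 2^(L+1) = 2 * 2^L, c ≥ 2, c odd ⇒ c ≥ 3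
        have hcge : 2 ≤ c := by
          have hpos : 0 < 2 ^ L := Nat.pow_pos (by norm_num)
          have h2L : 2 ^ (L + 1) = 2 * 2 ^ L := by rw [pow_succ]; ring
          by_contra h'
          have hc1 : c ≤ 1 := by omega
          have hxs : x (n + 1) ≤ 2 ^ L := by
            rw [hc]
            calc 2 ^ L * c ≤ 2 ^ L * 1 := Nat.mul_le_mul_left _ hc1
              _ = 2 ^ L := by ring
          omega
        have hcodd : c ≠ 2 * (c / 2) ∨ Odd c := by
          rcases Nat.even_or_odd c with he | ho
          · exfalso; apply hnd
            obtain ⟨d, hd'⟩ := he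
            exact ⟨d, by rw [hc, hd']; ring⟩
          · exact Or.inr ho
        have hc3 : 3 ≤ c := by
          rcases hcodd with h' | ho
          · omega
          · obtain ⟨k, hk⟩ := ho; omega
        have : 3 * 2 ^ L ≤ x (n + 1) := by
          rw [hc]; calc 3 * 2 ^ L = 2 ^ L * 3 := by ring
            _ ≤ 2 ^ L * c := Nat.mul_le_mul_left _ hc3
        have h2L : 2 ^ (L + 1) = 2 * 2 ^ L := by rw [pow_succ]; ring
        omega
      · have hlog : Nat.log 2 n = L :=
          Nat.log_eq_of_pow_le_of_lt_pow h (by omega)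
        rw [ihn, hlog] at hgt
        omega
    omega

/-- If `x 1 = 3` and for `n ≥ 2` the term `x n` is the smallest integer greater
than `x (n-1)` with `v₂(x n) = v₂(n)`, then `x (2^t) = 3·2^t` for all `t ≥ 0`. -/
theorem stmt5 (x : ℕ → ℕ) (h1 : x 1 = 3)
    (hrec : ∀ n, 2 ≤ n →
      IsLeast {m : ℕ | x (n - 1) < m ∧ padicValNat 2 m = padicValNat 2 n} (x n)) :
    ∀ t : ℕ, x (2 ^ t) = 3 * 2 ^ t := by
  intro t
  have h := closed_form x h1 hrec (2 ^ t) (Nat.one_le_two_pow)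
  have hlog : Nat.log 2 (2 ^ t) = t := Nat.log_pow one_lt_two t
  rw [h, hlog, pow_succ]
  ring
end

section
/- Let a > 1 with v_2(a) = 0, and define the sequence x_n by x_1 = a and, for n ≥ 2, x_n being the smallest integer greater than x_{n-1} with v_2(x_n) = v_2(n). Then there exists T such that x_{2^T} = 3·2^T. -/
private lemma v2_two_mul {m : ℕ} (hm : m ≠ 0) :
    padicValNat 2 (2 * m) = padicValNat 2 m + 1 := by
  rw [padicValNat.mul (by norm_num) hm, padicValNat.self one_lt_two]
  omega

private lemma v2_odd {m : ℕ} (hm : m % 2 = 1) : padicValNat 2 m = 0 :=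
  padicValNat.eq_zero_of_not_dvd (by omega)

private lemma key_s7 : ∀ a : ℕ, 1 < a → padicValNat 2 a = 0 →
    ∀ x : ℕ → ℕ, x 1 = a →
    (∀ n, 2 ≤ n →
      IsLeast {m : ℕ | x (n - 1) < m ∧ padicValNat 2 m = padicValNat 2 n} (x n)) →
    ∃ T : ℕ, x (2 ^ T) = 3 * 2 ^ T := by
  intro a
  induction a using Nat.strong_induction_on with
  | _ a IH =>
    intro ha ha2 x h1 hrec
    -- a is odd
    have haodd : a % 2 = 1 := by
      rcases Nat.even_or_odd a with h | h
      · exfalso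
        obtain ⟨k, hk⟩ := h
        have hk0 : k ≠ 0 := by omega
        have : padicValNat 2 a = padicValNat 2 k + 1 := by
          rw [show a = 2 * k by omega]; exact v2_two_mul hk0
        omega
      · exact Nat.odd_iff.mp h
    -- positivity of x(2n)
    have hpos : ∀ n, 1 ≤ n → 0 < x n := by
      intro n hn
      rcases Nat.lt_or_ge n 2 with h | h
      · have : n = 1 := by omega
        rw [this, h1]; omega
      · have := (hrec n h).1.1
        omega
    -- v2 of even-indexed terms
    have heven : ∀ n, 1 ≤ n → padicValNat 2 (x (2 * n)) = padicValNat 2 n + 1 := by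
      intro n hn
      have h := (hrec (2 * n) (by omega)).1.2
      rwa [v2_two_mul (by omega)] at h
    have hdvd : ∀ n, 1 ≤ n → 2 ∣ x (2 * n) := by
      intro n hn
      have h := pow_padicValNat_dvd (p := 2) (n := x (2 * n))
      rw [heven n hn] at h
      exact dvd_trans (dvd_pow_self 2 (by omega)) h
    set z : ℕ → ℕ := fun n => x (2 * n) / 2 with hzdef
    have hz : ∀ n, 1 ≤ n → x (2 * n) = 2 * z n := by
      intro n hn
      exact (Nat.mul_div_cancel' (hdvd n hn)).symm
    have hzpos : ∀ n, 1 ≤ n → 0 < z n := by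
      intro n hn
      have := hpos (2 * n) (by omega)
      have := hz n hn
      omega
    -- odd-indexed terms
    have hodd : ∀ n, 1 ≤ n → x (2 * n + 1) = x (2 * n) + 1 := by
      intro n hn
      have hmem : x (2 * n) + 1 ∈
          {m : ℕ | x (2 * n + 1 - 1) < m ∧ padicValNat 2 m = padicValNat 2 (2 * n + 1)} := by
        constructor
        · simp
        · have h2 : x (2 * n) = 2 * z n := hz n hn
          rw [v2_odd (by omega), v2_odd (by omega)]
      have hle := (hrec (2 * n + 1) (by omega)).2 hmem
      have hgt := (hrec (2 * n + 1) (by omega)).1.1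
      simp only [Nat.add_sub_cancel] at hgt
      omega
    -- z satisfies the same recursion
    have hzrec : ∀ n, 2 ≤ n →
        IsLeast {m : ℕ | z (n - 1) < m ∧ padicValNat 2 m = padicValNat 2 n} (z n) := by
      intro n hn
      have hprev : x (2 * n - 1) = 2 * z (n - 1) + 1 := by
        have h := hodd (n - 1) (by omega)
        have h2 := hz (n - 1) (by omega)
        rw [show 2 * n - 1 = 2 * (n - 1) + 1 by omega, h, h2]
      constructor
      · constructor
        · -- z (n-1) < z n
          have hgt := (hrec (2 * n) (by omega)).1.1
          have h2 := hz n (by omega)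
          have h3 := heven n (by omega)
          rw [hprev] at hgt
          -- x (2n) > 2 z(n-1) + 1 and x(2n) even
          omega
        · -- v2 (z n) = v2 n
          have h3 := heven n (by omega)
          rw [hz n (by omega), v2_two_mul (by have := hzpos n (by omega); omega)] at h3
          omega
      · intro m hm
        obtain ⟨hm1, hm2⟩ := hm
        have hm0 : m ≠ 0 := by
          have := hzpos (n - 1) (by omega); omega
        have hmem : 2 * m ∈
            {k : ℕ | x (2 * n - 1) < k ∧ padicValNat 2 k = padicValNat 2 (2 * n)} := by
          constructor
          · rw [hprev]; omega
          · rw [v2_two_mul hm0, v2_two_mul (by omega), hm2]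
        have hle := (hrec (2 * n) (by omega)).2 hmem
        have h2 := hz n (by omega)
        omega
    by_cases hA : a = 3
    · exact ⟨0, by simpa [hA] using h1⟩
    · -- a ≥ 5; bound x 2 ≤ a + 3
      have ha5 : 5 ≤ a := by omega
      have hm0 : ∃ m0, a < m0 ∧ m0 ≤ a + 3 ∧ padicValNat 2 m0 = 1 := by
        rcases Nat.lt_or_ge (a % 4) 2 with h | h
        · refine ⟨a + 1, by omega, by omega, ?_⟩
          rw [show a + 1 = 2 * ((a + 1) / 2) by omega,
            v2_two_mul (by omega), v2_odd (by omega)]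
        · refine ⟨a + 3, by omega, by omega, ?_⟩
          rw [show a + 3 = 2 * ((a + 3) / 2) by omega,
            v2_two_mul (by omega), v2_odd (by omega)]
      obtain ⟨m0, hm1, hm2, hm3⟩ := hm0
      have hx2le : x 2 ≤ m0 := by
        apply (hrec 2 le_rfl).2
        refine ⟨by rw [h1]; simpa using hm1, ?_⟩
        rw [hm3, padicValNat.self one_lt_two]
      have hx2gt : a < x 2 := by
        have := (hrec 2 le_rfl).1.1
        rwa [show (2 : ℕ) - 1 = 1 by rfl, h1] at this
      have hx2z : x 2 = 2 * z 1 := hz 1 le_rfl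
      -- z 1 properties
      have hz1lt : z 1 < a := by omega
      have hz1gt : 1 < z 1 := by omega
      have hz1v2 : padicValNat 2 (z 1) = 0 := by
        have h := heven 1 le_rfl
        rw [hx2z, v2_two_mul (by omega)] at h
        have hone : padicValNat 2 1 = 0 := by simp
        omega
      obtain ⟨S, hS⟩ := IH (z 1) hz1lt hz1gt hz1v2 z rfl hzrec
      refine ⟨S + 1, ?_⟩
      have : x (2 ^ (S + 1)) = 2 * z (2 ^ S) := by
        rw [show 2 ^ (S + 1) = 2 * 2 ^ S by ring]
        exact hz (2 ^ S) (Nat.one_le_two_pow)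
      rw [this, hS]; ring

/-- If `a > 1` is odd, `x 1 = a`, and for `n ≥ 2` the term `x n` is the smallest
integer greater than `x (n-1)` with `v₂(x n) = v₂(n)`, then `x (2^T) = 3·2^T`
for some `T`. -/
theorem stmt7 (a : ℕ) (ha : 1 < a) (ha2 : padicValNat 2 a = 0)
    (x : ℕ → ℕ) (h1 : x 1 = a)
    (hrec : ∀ n, 2 ≤ n →
      IsLeast {m : ℕ | x (n - 1) < m ∧ padicValNat 2 m = padicValNat 2 n} (x n)) :
    ∃ T : ℕ, x (2 ^ T) = 3 * 2 ^ T := by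
  exact key_s7 a ha ha2 x h1 hrec
end

section
/- Let a > 1 be odd and define x_n^{(a)} by x_1 = a and x_n being the smallest integer greater than x_{n-1} with v_2(x_n) = v_2(n); define x_n^{(3)} analogously with first term 3. Then there exists N such that x_n^{(a)} = x_n^{(3)} for all n ≥ N. -/
private def fstep (c : ℕ) : ℕ := if c % 4 = 1 then (c + 1) / 2 else (c + 3) / 2

private lemma val2_pow_mul (v u : ℕ) (hu : Odd u) : padicValNat 2 (2 ^ v * u) = v := by
  have hu0 : u ≠ 0 := by rintro rfl; simp [Nat.odd_iff] at hu
  have h2 : ¬ (2 ∣ u) := by rw [Nat.odd_iff] at hu; omega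
  have hz : padicValNat 2 u = 0 := padicValNat.eq_zero_of_not_dvd h2
  rw [padicValNat.mul (by positivity) hu0, padicValNat.prime_pow, hz]
  ring

private lemma exists_odd_rep (x : ℕ) (hx : x ≠ 0) :
    ∃ u, Odd u ∧ x = 2 ^ (padicValNat 2 x) * u := by
  obtain ⟨u, hu⟩ := pow_padicValNat_dvd (p := 2) (n := x)
  refine ⟨u, ?_, hu⟩
  rcases Nat.even_or_odd u with he | ho
  · exfalso
    obtain ⟨t, rfl⟩ := he
    exact pow_succ_padicValNat_not_dvd (p := 2) hx ⟨t, hu.trans (by rw [pow_succ]; ring)⟩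
  · exact ho

private lemma val2_add (C k j : ℕ) (hC : Odd C) (hj : 0 < j) (hjk : j < 2 ^ k) :
    padicValNat 2 (C * 2 ^ k + j) = padicValNat 2 j := by
  obtain ⟨u, hu, hrep⟩ := exists_odd_rep j hj.ne'
  set v := padicValNat 2 j with hv
  have hu1 : 1 ≤ u := hu.pos
  have hvk : v < k := by
    by_contra h
    have h1 : 2 ^ k ≤ 2 ^ v := Nat.pow_le_pow_right (by norm_num) (by omega)
    have h2 : 2 ^ v ≤ j := by rw [hrep]; exact Nat.le_mul_of_pos_right _ (by omega)
    omega
  have h2k : (2:ℕ) ^ k = 2 ^ v * 2 ^ (k - v) := by rw [← pow_add]; congr 1; omega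
  have key : C * 2 ^ k + j = 2 ^ v * (C * 2 ^ (k - v) + u) := by rw [hrep, h2k]; ring
  rw [key, val2_pow_mul]
  have hev : Even ((2:ℕ) ^ (k - v)) := by
    rw [Nat.even_pow]; exact ⟨even_two, by omega⟩
  exact (hev.mul_left C).add_odd hu

private lemma fstep_three : fstep 3 = 3 := by norm_num [fstep]

private lemma fstep_odd {c : ℕ} (hc : Odd c) : Odd (fstep c) := by
  rw [Nat.odd_iff] at hc ⊢; unfold fstep; split <;> omega

private lemma fstep_ge {c : ℕ} (hc : Odd c) (h3 : 3 ≤ c) : 3 ≤ fstep c := by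
  rw [Nat.odd_iff] at hc; unfold fstep; split <;> omega

private lemma fstep_lt {c : ℕ} (hc : Odd c) (h5 : 5 ≤ c) : fstep c < c := by
  rw [Nat.odd_iff] at hc; unfold fstep; split <;> omega

private lemma iter_three (k : ℕ) : fstep^[k] 3 = 3 := by
  induction k with
  | zero => rfl
  | succ k ih => rw [Function.iterate_succ_apply', ih, fstep_three]

private lemma iter_inv (c0 : ℕ) (hodd : Odd c0) (h3 : 3 ≤ c0) (k : ℕ) :
    Odd (fstep^[k] c0) ∧ 3 ≤ fstep^[k] c0 := by
  induction k with
  | zero => exact ⟨hodd, h3⟩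
  | succ k ih =>
    rw [Function.iterate_succ_apply']
    exact ⟨fstep_odd ih.1, fstep_ge ih.1 ih.2⟩

private lemma iter_eq_three (k : ℕ) : ∀ c, Odd c → 3 ≤ c → c ≤ 3 + k → fstep^[k] c = 3 := by
  induction k with
  | zero => intro c hc h3 hle; simpa using (by omega : c = 3)
  | succ k ih =>
    intro c hc h3 hle
    rw [Function.iterate_succ_apply]
    by_cases h : c = 3
    · subst h; rw [fstep_three]; exact iter_three k
    · have h5 : 5 ≤ c := by rw [Nat.odd_iff] at hc; omega
      exact ih _ (fstep_odd hc) (fstep_ge hc h3) (by have := fstep_lt hc h5; omega)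

private lemma seq_formula (x : ℕ → ℕ) (c0 : ℕ) (hodd : Odd c0) (h3 : 3 ≤ c0) (h1 : x 1 = c0)
    (hrec : ∀ n, 2 ≤ n →
      IsLeast {m : ℕ | x (n - 1) < m ∧ padicValNat 2 m = padicValNat 2 n} (x n)) :
    ∀ n, 1 ≤ n →
      x n = fstep^[Nat.log 2 n] c0 * 2 ^ (Nat.log 2 n) + (n - 2 ^ (Nat.log 2 n)) := by
  intro n hn
  induction n, hn using Nat.le_induction with
  | base => simp [Nat.log_one_right, h1]
  | succ n hn ih =>
    obtain ⟨k, hkdef⟩ : ∃ k, Nat.log 2 (n + 1) = k := ⟨_, rfl⟩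
    rw [hkdef]
    have hle : 2 ^ k ≤ n + 1 := hkdef ▸ Nat.pow_log_le_self 2 (by omega)
    have hlt : n + 1 < 2 ^ (k + 1) := hkdef ▸ Nat.lt_pow_succ_log_self one_lt_two _
    have hrecn := hrec (n + 1) (by omega)
    simp only [Nat.add_sub_cancel] at hrecn
    by_cases hpow : n + 1 = 2 ^ k
    · -- start of a new block
      have hk1 : 1 ≤ k := by
        rcases Nat.eq_zero_or_pos k with h | h
        · rw [h] at hpow; omega
        · exact h
      obtain ⟨k', rfl⟩ : ∃ k', k = k' + 1 := ⟨k - 1, by omega⟩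
      have hlogn : Nat.log 2 n = k' := by
        apply Nat.log_eq_of_pow_le_of_lt_pow
        · have : (2:ℕ) ^ k' < 2 ^ (k' + 1) :=
            Nat.pow_lt_pow_right one_lt_two (by omega)
          omega
        · omega
      obtain ⟨c, hcdef⟩ : ∃ c, fstep^[k'] c0 = c := ⟨_, rfl⟩
      obtain ⟨hcodd, hc3⟩ : Odd c ∧ 3 ≤ c := hcdef ▸ iter_inv c0 hodd h3 k'
      rw [hlogn, hcdef] at ih
      have hp : (1:ℕ) ≤ 2 ^ k' := Nat.one_le_two_pow
      have hxn : x n = c * 2 ^ k' + (2 ^ k' - 1) := by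
        rw [ih]; congr 1
        have : (2:ℕ) ^ (k' + 1) = 2 * 2 ^ k' := by ring
        omega
      have hval : padicValNat 2 (n + 1) = k' + 1 := by
        rw [hpow]; exact padicValNat.prime_pow _
      have hfodd := fstep_odd hcodd
      have hf3 := fstep_ge hcodd hc3
      have hcf : c + 1 ≤ 2 * fstep c := by
        rw [Nat.odd_iff] at hcodd; unfold fstep; split <;> omega
      have hm0mem : 2 ^ (k' + 1) * fstep c ∈
          {m : ℕ | x n < m ∧ padicValNat 2 m = padicValNat 2 (n + 1)} := by
        constructor
        · rw [hxn]
          have he : 2 ^ (k' + 1) * fstep c = (2 * fstep c) * 2 ^ k' := by ring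
          rw [he]
          have h1 : c * 2 ^ k' + (2 ^ k' - 1) < (c + 1) * 2 ^ k' := by
            have : (c + 1) * 2 ^ k' = c * 2 ^ k' + 2 ^ k' := by ring
            omega
          have h2 : (c + 1) * 2 ^ k' ≤ (2 * fstep c) * 2 ^ k' :=
            Nat.mul_le_mul_right _ hcf
          omega
        · rw [hval, val2_pow_mul _ _ hfodd]
      have hub := hrecn.2 hm0mem
      obtain ⟨⟨hgt, hvx⟩, -⟩ := hrecn
      have hx0 : x (n + 1) ≠ 0 := by omega
      obtain ⟨t, htodd, htrep⟩ := exists_odd_rep (x (n + 1)) hx0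
      rw [hvx, hval] at htrep
      have hxge : 2 ^ (k' + 1) * fstep c ≤ x (n + 1) := by
        rw [htrep]
        apply Nat.mul_le_mul_left
        have h2t : (c + 1) * 2 ^ k' ≤ 2 ^ (k' + 1) * t := by
          rw [← htrep]
          have : (c + 1) * 2 ^ k' = c * 2 ^ k' + 2 ^ k' := by ring
          omega
        have h2t' : c + 1 ≤ 2 * t := by
          have hexp : (2:ℕ) ^ (k' + 1) * t = (2 * t) * 2 ^ k' := by ring
          rw [hexp] at h2t
          exact Nat.le_of_mul_le_mul_right h2t (by omega)
        rw [Nat.odd_iff] at hcodd htodd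
        unfold fstep; split <;> omega
      have hxeq : x (n + 1) = 2 ^ (k' + 1) * fstep c := le_antisymm hub hxge
      rw [hxeq, Function.iterate_succ_apply', hcdef, hpow]
      simp [mul_comm]
    · -- inside a block
      have hlen : 2 ^ k ≤ n := by omega
      have hlogn : Nat.log 2 n = k :=
        Nat.log_eq_of_pow_le_of_lt_pow hlen (by omega)
      obtain ⟨c, hcdef⟩ : ∃ c, fstep^[k] c0 = c := ⟨_, rfl⟩
      obtain ⟨hcodd, hc3⟩ : Odd c ∧ 3 ≤ c := hcdef ▸ iter_inv c0 hodd h3 k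
      rw [hlogn, hcdef] at ih
      rw [hcdef]
      obtain ⟨j, hj⟩ : ∃ j, n + 1 - 2 ^ k = j := ⟨_, rfl⟩
      have hj1 : 1 ≤ j := by omega
      have hjk : j < 2 ^ k := by
        have : (2:ℕ) ^ (k + 1) = 2 * 2 ^ k := by ring
        omega
      have hvn : padicValNat 2 (n + 1) = padicValNat 2 j := by
        have he : n + 1 = 1 * 2 ^ k + j := by omega
        rw [he]; exact val2_add 1 k j odd_one (by omega) hjk
      have hvx : padicValNat 2 (x n + 1) = padicValNat 2 j := by
        have he : x n + 1 = c * 2 ^ k + j := by rw [ih]; omega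
        rw [he]; exact val2_add c k j hcodd (by omega) hjk
      have hmem : x n + 1 ∈ {m : ℕ | x n < m ∧ padicValNat 2 m = padicValNat 2 (n + 1)} :=
        ⟨by omega, by rw [hvx, hvn]⟩
      have hub := hrecn.2 hmem
      obtain ⟨⟨hgt, -⟩, -⟩ := hrecn
      have hxeq : x (n + 1) = x n + 1 := by omega
      rw [hxeq, ih]
      omega

/-- Every minimal recursive sequence (w.r.t. 2-adic valuation) starting at an odd
`a > 1` eventually coincides with the one starting at `3`. -/
theorem stmt8 (a : ℕ) (ha : 1 < a) (haodd : Odd a)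
    (xa x3 : ℕ → ℕ) (h1a : xa 1 = a) (h13 : x3 1 = 3)
    (hreca : ∀ n, 2 ≤ n →
      IsLeast {m : ℕ | xa (n - 1) < m ∧ padicValNat 2 m = padicValNat 2 n} (xa n))
    (hrec3 : ∀ n, 2 ≤ n →
      IsLeast {m : ℕ | x3 (n - 1) < m ∧ padicValNat 2 m = padicValNat 2 n} (x3 n)) :
    ∃ N : ℕ, ∀ n, N ≤ n → xa n = x3 n := by
  have h3a : 3 ≤ a := by rw [Nat.odd_iff] at haodd; omega
  refine ⟨2 ^ a, fun n hn => ?_⟩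
  have hn1 : 1 ≤ n := le_trans Nat.one_le_two_pow hn
  have hk : a ≤ Nat.log 2 n := (Nat.le_log_iff_pow_le one_lt_two (by omega)).mpr hn
  rw [seq_formula xa a haodd h3a h1a hreca n hn1,
      seq_formula x3 3 (by decide) le_rfl h13 hrec3 n hn1,
      iter_three, iter_eq_three _ a haodd h3a (by omega)]
end

section
/- The sequence x_n defined by x_1 = 3 and, for n ≥ 2, x_n being the smallest integer greater than x_{n-1} with v_2(x_n) = v_2(n), satisfies the recursions x_{2n-1} = 2·x_{n-1} + 1 for n ≥ 2 and x_{2n} = 2·x_n for n ≥ 1, with x_1 = 3 and x_2 = 6. -/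
lemma v2eq {m k : ℕ} (hm : m ≠ 0) (h1 : 2 ^ k ∣ m) (h2 : ¬ 2 ^ (k + 1) ∣ m) :
    padicValNat 2 m = k := by
  have a := (padicValNat_dvd_iff_le (p := 2) hm).mp h1
  have b : ¬ (k + 1 ≤ padicValNat 2 m) := fun h => h2 ((padicValNat_dvd_iff_le hm).mpr h)
  omega

lemma v2_add_pow {n L : ℕ} (hn : 0 < n) (hL : n < 2 ^ (L + 1)) :
    padicValNat 2 (n + 2 ^ (L + 1)) = padicValNat 2 n := by
  set k := padicValNat 2 n with hk
  have hdvd : 2 ^ k ∣ n := pow_padicValNat_dvd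
  have hnd : ¬ 2 ^ (k + 1) ∣ n := pow_succ_padicValNat_not_dvd hn.ne'
  have hkL : k + 1 ≤ L + 1 := by
    have h1 := Nat.le_of_dvd hn hdvd
    have h2 := (Nat.pow_lt_pow_iff_right (by norm_num : 1 < 2)).mp (lt_of_le_of_lt h1 hL)
    omega
  have hP : (2:ℕ) ^ (k+1) ∣ 2 ^ (L+1) := pow_dvd_pow 2 hkL
  refine v2eq (by positivity) (hdvd.add ((pow_dvd_pow 2 (by omega)).trans hP)) ?_
  intro h
  have : (2:ℕ) ^ (k+1) ∣ n := by
    have := Nat.dvd_sub h hP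
    simpa using this
  exact hnd this

lemma v2_ge3 {m k : ℕ} (hm : m ≠ 0) (hv : padicValNat 2 m = k) (h : 2 ^ (k + 1) ≤ m) :
    3 * 2 ^ k ≤ m := by
  have hdvd : 2 ^ k ∣ m := hv ▸ pow_padicValNat_dvd
  have hnd : ¬ 2 ^ (k + 1) ∣ m := hv ▸ pow_succ_padicValNat_not_dvd hm
  obtain ⟨q, hq⟩ := hdvd
  have hq2 : 2 ≤ q := by
    rcases q with _ | _ | q
    · omega
    · rw [pow_succ] at h; omega
    · omega
  have hqodd : ¬ 2 ∣ q := by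
    intro ⟨r, hr⟩
    exact hnd ⟨r, by rw [hq, hr, pow_succ]; ring⟩
  have hq3 : 3 ≤ q := by omega
  calc 3 * 2 ^ k ≤ 2 ^ k * q := by nlinarith [pow_pos (by norm_num : (0:ℕ) < 2) k]
    _ = m := hq.symm

/-- The minimal recursive sequence starting at `3` (w.r.t. 2-adic valuation)
satisfies `x (2n-1) = 2·x (n-1) + 1` for `n ≥ 2`, `x (2n) = 2·x n` for `n ≥ 1`,
with `x 1 = 3`, `x 2 = 6`. -/
theorem stmt9 (x : ℕ → ℕ) (h1 : x 1 = 3)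
    (hrec : ∀ n, 2 ≤ n →
      IsLeast {m : ℕ | x (n - 1) < m ∧ padicValNat 2 m = padicValNat 2 n} (x n)) :
    (∀ n, 2 ≤ n → x (2 * n - 1) = 2 * x (n - 1) + 1) ∧
    (∀ n, 1 ≤ n → x (2 * n) = 2 * x n) ∧ x 1 = 3 ∧ x 2 = 6 := by
  have pow_pos' : ∀ k : ℕ, 0 < 2 ^ k := fun k => pow_pos (by norm_num) k
  have key : ∀ n, 1 ≤ n → x n = n + 2 ^ (Nat.log 2 n + 1) := by
    intro n
    induction n using Nat.strong_induction_on with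
    | _ n ih =>
      intro hn
      rcases eq_or_lt_of_le hn with h | hn2
      · rw [← h]; simpa using h1
      have hprev := ih (n - 1) (by omega) (by omega)
      set L := Nat.log 2 n with hLdef
      have hL1 : 2 ^ L ≤ n := Nat.pow_log_le_self 2 (by omega)
      have hL2 : n < 2 ^ (L + 1) := Nat.lt_pow_succ_log_self (by norm_num) n
      have hlogle : Nat.log 2 (n - 1) ≤ L := Nat.log_mono_right (by omega)
      have hmem : x (n - 1) < n + 2 ^ (L + 1) ∧
          padicValNat 2 (n + 2 ^ (L + 1)) = padicValNat 2 n := by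
        constructor
        · rw [hprev]
          have : (2:ℕ) ^ (Nat.log 2 (n - 1) + 1) ≤ 2 ^ (L + 1) :=
            Nat.pow_le_pow_right (by norm_num) (by omega)
          omega
        · exact v2_add_pow (by omega) hL2
      have hlb : ∀ m, x (n - 1) < m ∧ padicValNat 2 m = padicValNat 2 n →
          n + 2 ^ (L + 1) ≤ m := by
        rintro m ⟨hm1, hm2⟩
        rcases eq_or_lt_of_le hL1 with hpow | hpow
        · -- n = 2^L
          have hL0 : 1 ≤ L := by
            by_contra hc
            interval_cases L <;> omega
          have hvn : padicValNat 2 n = L := by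
            rw [← hpow]; exact padicValNat.prime_pow L
          have hlogprev : Nat.log 2 (n - 1) = L - 1 := by
            apply Nat.log_eq_of_pow_le_of_lt_pow
            · have : (2:ℕ) ^ (L - 1) * 2 = 2 ^ L := by
                rw [← pow_succ]; congr 1; omega
              omega
            · have : (2:ℕ) ^ (L - 1 + 1) = 2 ^ L := by congr 1; omega
              omega
          have hxprev : x (n - 1) = 2 ^ (L + 1) - 1 := by
            rw [hprev, hlogprev]
            have : (2:ℕ) ^ (L - 1 + 1) = 2 ^ L := by congr 1; omega
            rw [this, ← hpow, pow_succ]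
            omega
          have hm2' : 2 ^ (L + 1) ≤ m := by omega
          have hmne : m ≠ 0 := by have := pow_pos' (L+1); omega
          have h3 : 3 * 2 ^ L ≤ m := v2_ge3 hmne (hm2.trans hvn) hm2'
          rw [← hpow, pow_succ]
          omega
        · -- 2^L < n, so log (n-1) = L
          have hlogprev : Nat.log 2 (n - 1) = L :=
            Nat.log_eq_of_pow_le_of_lt_pow (by omega) (by omega)
          rw [hprev, hlogprev] at hm1
          omega
      exact (hrec n hn2).unique ⟨hmem, hlb⟩
  have pow_pos : ∀ k : ℕ, 0 < 2 ^ k := fun k => pow_pos (by norm_num) k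
  refine ⟨?_, ?_, h1, ?_⟩
  · intro n hn
    have hj : Nat.log 2 (2 * n - 1) = Nat.log 2 (n - 1) + 1 := by
      set j := Nat.log 2 (n - 1) with hj
      have ha : 2 ^ j ≤ n - 1 := Nat.pow_log_le_self 2 (by omega)
      have hb : n - 1 < 2 ^ (j + 1) := Nat.lt_pow_succ_log_self (by norm_num) _
      apply Nat.log_eq_of_pow_le_of_lt_pow
      · rw [pow_succ]; omega
      · rw [pow_succ, pow_succ]; omega
    rw [key (2 * n - 1) (by omega), key (n - 1) (by omega), hj, pow_succ]
    have := pow_pos (Nat.log 2 (n - 1) + 1)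
    omega
  · intro n hn
    have hj : Nat.log 2 (2 * n) = Nat.log 2 n + 1 := by
      rw [mul_comm]; exact Nat.log_mul_base (by norm_num) (by omega)
    rw [key (2 * n) (by omega), key n hn, hj, pow_succ]
    ring
  · rw [key 2 (by norm_num)]; rw [show Nat.log 2 2 = 1 from Nat.log_eq_of_pow_le_of_lt_pow (by norm_num) (by norm_num)]; norm_num
end

section
/- Let y_n be defined by y_1 = 3, y_2 = 6, y_{2n-1} = 2·y_{n-1} + 1 (n ≥ 2), and y_{2n} = 2·y_n (n ≥ 2). Then for every n ≥ 1, v_2(y_n) = v_2(n). -/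
/-- If `y 1 = 3`, `y 2 = 6`, `y (2n-1) = 2·y (n-1) + 1` and `y (2n) = 2·y n`
for `n ≥ 2`, then `v₂(y n) = v₂(n)` for every `n ≥ 1`. -/
theorem stmt10 (y : ℕ → ℕ) (h1 : y 1 = 3) (h2 : y 2 = 6)
    (hodd : ∀ n, 2 ≤ n → y (2 * n - 1) = 2 * y (n - 1) + 1)
    (heven : ∀ n, 2 ≤ n → y (2 * n) = 2 * y n) :
    ∀ n, 1 ≤ n → padicValNat 2 (y n) = padicValNat 2 n := by
  have hpos : ∀ n, 1 ≤ n → 0 < y n := by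
    intro n
    induction n using Nat.strong_induction_on with
    | _ n ih =>
      intro hn
      rcases Nat.even_or_odd n with ⟨m, hm⟩ | ⟨k, hk⟩
      · -- n = 2m
        have hm2 : n = 2 * m := by omega
        rcases Nat.lt_or_ge n 4 with h4 | h4
        · interval_cases n <;> omega
        · have hmge : 2 ≤ m := by omega
          have := heven m hmge
          rw [hm2, this]
          have := ih m (by omega) (by omega)
          omega
      · -- n = 2k+1
        rcases Nat.lt_or_ge n 3 with h3 | h3
        · interval_cases n <;> omega
        · have hk1 : 1 ≤ k := by omega
          have hkey := hodd (k + 1) (by omega)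
          have hn' : 2 * (k + 1) - 1 = n := by omega
          rw [hn'] at hkey
          simp at hkey
          omega
  intro n
  induction n using Nat.strong_induction_on with
  | _ n ih =>
    intro hn
    rcases Nat.even_or_odd n with ⟨m, hm⟩ | ⟨k, hk⟩
    · have hm2 : n = 2 * m := by omega
      rcases Nat.lt_or_ge n 4 with h4 | h4
      · interval_cases n
        · omega
        · have : (6:ℕ) = 2 * 3 := by norm_num
          rw [h2, this, padicValNat.mul two_ne_zero (by norm_num),
            padicValNat.eq_zero_of_not_dvd (show ¬ 2 ∣ 3 by norm_num)]
          omega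
        · omega
      · have hmge : 2 ≤ m := by omega
        have hy := heven m hmge
        have hym : 0 < y m := hpos m (by omega)
        have hih := ih m (by omega) (by omega)
        rw [hm2, hy]
        rw [padicValNat.mul (by norm_num) (by omega),
            padicValNat.mul (by norm_num) (by omega : m ≠ 0)]
        rw [hih]
    · rcases Nat.lt_or_ge n 3 with h3 | h3
      · interval_cases n
        · rw [h1, padicValNat.eq_zero_of_not_dvd (by norm_num),
            padicValNat.eq_zero_of_not_dvd (by norm_num)]
        · omega
      · have hkey := hodd (k + 1) (by omega)
        have hn' : 2 * (k + 1) - 1 = n := by omega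
        rw [hn'] at hkey
        simp at hkey
        rw [hkey]
        rw [padicValNat.eq_zero_of_not_dvd (by omega),
            padicValNat.eq_zero_of_not_dvd (by omega)]
end

section
/- Let a(n) be defined by a(0) = 0, a(1) = 1, a(2n) = 2a(n) + 1 and a(2n+1) = 2a(n+1) for n ≥ 1. Then a(n) enumerates exactly the positive integers whose binary expansion does not begin with 10, i.e., integers m such that m < 2^{k+1} implies m ∉ [2^k, 2^k + 2^{k-1}) for the leading bit position k ≥ 1. -/
private lemma clog_eq_of (n e : ℕ) (he : 1 ≤ e) (hl : 2 ^ (e - 1) < n) (hu : n ≤ 2 ^ e) :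
    Nat.clog 2 n = e := by
  have h1 : Nat.clog 2 n ≤ e := (Nat.clog_le_iff_le_pow one_lt_two).mpr hu
  have h2 : e - 1 < Nat.clog 2 n := (Nat.lt_clog_iff_pow_lt one_lt_two).mpr hl
  omega

private lemma clog_double (m : ℕ) (hm : 1 ≤ m) :
    Nat.clog 2 (2 * m) = Nat.clog 2 m + 1 := by
  set e := Nat.clog 2 m with he
  have hub : m ≤ 2 ^ e := Nat.le_pow_clog one_lt_two m
  apply clog_eq_of _ _ (by omega)
  · simp only [Nat.add_sub_cancel]
    rcases eq_or_lt_of_le hm with h | h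
    · have : e = 0 := by rw [he, ← h]; simp
      simp [this]; omega
    · have hlb : 2 ^ (e - 1) < m := Nat.pow_pred_clog_lt_self one_lt_two h
      have he1 : 1 ≤ e := by
        have := (Nat.lt_clog_iff_pow_lt one_lt_two (x := m) (y := 0)).mpr (by simpa using h)
        omega
      have hpe : 2 ^ e = 2 * 2 ^ (e - 1) := by
        conv_lhs => rw [show e = (e - 1) + 1 by omega]
        ring
      omega
  · rw [pow_succ]; omega

private lemma clog_odd (m : ℕ) (hm : 1 ≤ m) :
    Nat.clog 2 (2 * m + 1) = Nat.clog 2 (m + 1) + 1 := by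
  set e := Nat.clog 2 (m + 1) with he
  have hub : m + 1 ≤ 2 ^ e := Nat.le_pow_clog one_lt_two (m + 1)
  have hlb : 2 ^ (e - 1) < m + 1 := Nat.pow_pred_clog_lt_self one_lt_two (by omega)
  have he1 : 1 ≤ e := by
    have := (Nat.lt_clog_iff_pow_lt one_lt_two (x := m + 1) (y := 0)).mpr (by simp; omega)
    omega
  have hpe : 2 ^ e = 2 * 2 ^ (e - 1) := by
    conv_lhs => rw [show e = (e - 1) + 1 by omega]
    ring
  apply clog_eq_of _ _ (by omega)
  · simpa using by omega
  · rw [pow_succ]; omega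

private lemma closed_form_s12 (a : ℕ → ℕ) (h1 : a 1 = 1)
    (heven : ∀ n, 1 ≤ n → a (2 * n) = 2 * a n + 1)
    (hodd : ∀ n, 1 ≤ n → a (2 * n + 1) = 2 * a (n + 1)) :
    ∀ n, 1 ≤ n → a n = n + 2 ^ (Nat.clog 2 n) - 1 := by
  intro n
  induction n using Nat.strong_induction_on with
  | _ n ih =>
    intro hn
    rcases Nat.even_or_odd n with ⟨m, hme⟩ | ⟨m, hmo⟩
    · have hm1 : 1 ≤ m := by omega
      have hrec := heven m hm1
      have hprev := ih m (by omega) hm1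
      have hclog : Nat.clog 2 (2 * m) = Nat.clog 2 m + 1 := clog_double m hm1
      have hpos : 1 ≤ 2 ^ Nat.clog 2 m := Nat.one_le_two_pow
      subst hme
      rw [show m + m = 2 * m by ring] at *
      rw [hrec, hprev, hclog, pow_succ]
      omega
    · rcases Nat.eq_zero_or_pos m with hm0 | hm1
      · subst hmo; subst hm0; simpa using h1
      · have hrec := hodd m hm1
        have hprev := ih (m + 1) (by omega) (by omega)
        have hclog : Nat.clog 2 (2 * m + 1) = Nat.clog 2 (m + 1) + 1 := clog_odd m hm1
        have hpos : 1 ≤ 2 ^ Nat.clog 2 (m + 1) := Nat.one_le_two_pow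
        subst hmo
        rw [hrec, hprev, hclog, pow_succ]
        omega

/-- Deleham's recursion `a 0 = 0`, `a 1 = 1`, `a (2n) = 2·a n + 1`,
`a (2n+1) = 2·a (n+1)` (for `n ≥ 1`) enumerates exactly the positive integers
whose binary expansion does not begin with `10`, i.e. positive `m` such that
either the leading bit position `k = Nat.log 2 m` is `0`, or
`m ≥ 2^k + 2^(k-1)`. -/
theorem stmt12 (a : ℕ → ℕ) (h0 : a 0 = 0) (h1 : a 1 = 1)
    (heven : ∀ n, 1 ≤ n → a (2 * n) = 2 * a n + 1)
    (hodd : ∀ n, 1 ≤ n → a (2 * n + 1) = 2 * a (n + 1)) :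
    a '' {n : ℕ | 1 ≤ n} =
      {m : ℕ | 0 < m ∧ (Nat.log 2 m = 0 ∨
        2 ^ (Nat.log 2 m) + 2 ^ (Nat.log 2 m - 1) ≤ m)} := by
  have hcf := closed_form_s12 a h1 heven hodd
  ext m
  simp only [Set.mem_image, Set.mem_setOf_eq]
  constructor
  · rintro ⟨n, hn, rfl⟩
    rcases eq_or_lt_of_le hn with h | h
    · rw [← h, h1]
      exact ⟨one_pos, Or.inl (by simp)⟩
    · set e := Nat.clog 2 n with he
      have hub : n ≤ 2 ^ e := Nat.le_pow_clog one_lt_two n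
      have hlb : 2 ^ (e - 1) < n := Nat.pow_pred_clog_lt_self one_lt_two h
      have he1 : 1 ≤ e := by
        have := (Nat.lt_clog_iff_pow_lt one_lt_two (x := n) (y := 0)).mpr (by simpa using h)
        omega
      have hpe : 2 ^ e = 2 * 2 ^ (e - 1) := by
        conv_lhs => rw [show e = (e - 1) + 1 by omega]
        ring
      have hval : a n = n + 2 ^ e - 1 := hcf n hn
      have hlog : Nat.log 2 (a n) = e := by
        apply Nat.log_eq_of_pow_le_of_lt_pow
        · omega
        · rw [pow_succ]; omega
      rw [hlog]
      exact ⟨by omega, Or.inr (by omega)⟩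
  · rintro ⟨hm, hcond⟩
    rcases hcond with hk | hk
    · have hm1 : m = 1 := by
        rcases Nat.log_eq_zero_iff.mp hk with h | h <;> omega
      exact ⟨1, le_refl 1, by omega⟩
    · set k := Nat.log 2 m with hkdef
      have hk1 : 1 ≤ k := by
        rcases Nat.eq_zero_or_pos k with h0 | h
        · rw [h0] at hk; simp at hk
          have := Nat.log_eq_zero_iff.mp h0
          omega
        · exact h
      have hlow : 2 ^ k ≤ m := Nat.pow_log_le_self 2 (by omega)
      have hup : m < 2 ^ (k + 1) := Nat.lt_pow_succ_log_self one_lt_two m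
      have hpe : 2 ^ k = 2 * 2 ^ (k - 1) := by
        conv_lhs => rw [show k = (k - 1) + 1 by omega]
        ring
      have hpsu : 2 ^ (k + 1) = 2 * 2 ^ k := by rw [pow_succ]; ring
      have hppos : 1 ≤ 2 ^ (k - 1) := Nat.one_le_two_pow
      refine ⟨m - 2 ^ k + 1, by omega, ?_⟩
      have hclog : Nat.clog 2 (m - 2 ^ k + 1) = k :=
        clog_eq_of _ _ hk1 (by omega) (by omega)
      rw [hcf _ (by omega), hclog]
      omega
end

section
/- Define x_n by x_1 = 4 and, for n ≥ 2, x_n is the smallest integer greater than x_{n-1} such that the number of ones in the binary expansion of x_n has the same parity as the number of ones in the binary expansion of n. Then x_n = 2n + 3 if n·v_2(n+1) is even, and x_n = 2n + 2 otherwise. -/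
private lemma sum_double (n : ℕ) (hn : 0 < n) :
    (Nat.digits 2 (2 * n)).sum = (Nat.digits 2 n).sum := by
  rw [Nat.digits_def' (by norm_num : 1 < 2) (by omega)]
  simp [Nat.mul_div_cancel_left]

private lemma sum_double_add_one (n : ℕ) :
    (Nat.digits 2 (2 * n + 1)).sum = (Nat.digits 2 n).sum + 1 := by
  rw [Nat.digits_def' (by norm_num : 1 < 2) (by omega)]
  have h1 : (2 * n + 1) % 2 = 1 := by omega
  have h2 : (2 * n + 1) / 2 = n := by omega
  rw [h1, h2]
  simp [Nat.add_comm]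

private lemma tm_succ : ∀ n : ℕ,
    (Nat.digits 2 (n + 1)).sum % 2
      = ((Nat.digits 2 n).sum + 1 + padicValNat 2 (n + 1)) % 2 := by
  intro n
  induction n using Nat.strong_induction_on with
  | _ n ih =>
    match n, ih with
    | 0, _ => norm_num
    | Nat.succ n, ih =>
      simp only [Nat.succ_eq_add_one]
      rcases Nat.even_or_odd (n + 1) with ⟨m, hm⟩ | ⟨m, hm⟩
      · have hm' : n + 1 = 2 * m := by omega
        have hm0 : 0 < m := by omega
        have hodd : ¬ (2 ∣ (2 * m + 1)) := by omega
        rw [hm', sum_double_add_one, sum_double m hm0,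
          padicValNat.eq_zero_of_not_dvd hodd]
      · have hm' : n + 1 = 2 * m + 1 := by omega
        have hv : padicValNat 2 (2 * (m + 1)) = 1 + padicValNat 2 (m + 1) := by
          rw [padicValNat.mul (by norm_num) (by omega), padicValNat.self (by norm_num)]
        have ihm := ih m (by omega)
        rw [hm', show 2*m+1+1 = 2*(m+1) by ring, sum_double (m + 1) (by omega),
          sum_double_add_one, hv]
        omega

private lemma even_mul_padic (n : ℕ) :
    Even (n * padicValNat 2 (n + 1)) ↔ Even (padicValNat 2 (n + 1)) := by
  rcases Nat.even_or_odd n with h | h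
  · have : ¬ (2 ∣ (n + 1)) := by
      obtain ⟨k, hk⟩ := h; omega
    rw [padicValNat.eq_zero_of_not_dvd this]
    simp
  · rw [Nat.even_mul]
    simp [Nat.odd_iff.mp h, Nat.not_even_iff_odd.mpr h]

/-- Let `t m` be the parity of the binary digit sum of `m` (Thue–Morse).
If `x 1 = 4` and for `n ≥ 2` the term `x n` is the smallest integer greater
than `x (n-1)` with `t (x n) = t n`, then `x n = 2n + 3` when `n·v₂(n+1)` is
even and `x n = 2n + 2` otherwise. -/
theorem stmt13 (x : ℕ → ℕ) (h1 : x 1 = 4)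
    (hrec : ∀ n, 2 ≤ n →
      IsLeast {m : ℕ | x (n - 1) < m ∧
        (Nat.digits 2 m).sum % 2 = (Nat.digits 2 n).sum % 2} (x n)) :
    ∀ n, 1 ≤ n →
      x n = if Even (n * padicValNat 2 (n + 1)) then 2 * n + 3 else 2 * n + 2 := by
  intro n hn
  induction n, hn using Nat.le_induction with
  | base =>
    have : padicValNat 2 2 = 1 := padicValNat.self (by norm_num)
    rw [h1, this]
    norm_num
  | succ n hn ih =>
    have hL := hrec (n + 1) (by omega)
    simp only [Nat.add_sub_cancel] at hL
    -- value of x n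
    have hxlb : 2 * n + 2 ≤ x n := by
      rw [ih]; split <;> omega
    have hxub : x n ≤ 2 * n + 3 := by
      rw [ih]; split <;> omega
    simp only [even_mul_padic (n+1)]
    set v := padicValNat 2 (n + 2) with hv
    have htm : (Nat.digits 2 (n + 2)).sum % 2
        = ((Nat.digits 2 (n + 1)).sum + 1 + v) % 2 := tm_succ (n + 1)
    by_cases hev : Even v
    · obtain ⟨c, hc⟩ := hev
      rw [if_pos ⟨c, hc⟩]
      refine hL.unique ⟨⟨by omega, ?_⟩, ?_⟩
      · -- t(2n+5) = t(n+1)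
        have h5 : (2 * (n + 1) + 3 : ℕ) = 2 * (n + 2) + 1 := by ring
        rw [h5, sum_double_add_one]
        omega
      · rintro k ⟨hk1, hk2⟩
        have hcase : k = 2 * n + 3 ∨ k = 2 * n + 4 ∨ 2 * (n + 1) + 3 ≤ k := by omega
        rcases hcase with h | h | h
        · exfalso
          rw [h, show 2 * n + 3 = 2 * (n + 1) + 1 by ring, sum_double_add_one] at hk2
          omega
        · exfalso
          rw [h, show 2 * n + 4 = 2 * (n + 2) by ring, sum_double (n + 2) (by omega)] at hk2
          omega
        · exact h
    · -- v odd, so n even, so x n = 2n + 3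
      have hvodd : v % 2 = 1 := Nat.odd_iff.mp (Nat.not_even_iff_odd.mp hev)
      have hv1 : 1 ≤ v := by omega
      have hdvd : 2 ∣ (n + 2) := by
        by_contra hnd
        rw [hv, padicValNat.eq_zero_of_not_dvd hnd] at hv1
        omega
      have hneven : Even n := by obtain ⟨k, hk⟩ := hdvd; exact ⟨k - 1, by omega⟩
      have hxn : x n = 2 * n + 3 := by
        rw [ih, if_pos (hneven.mul_right _)]
      rw [if_neg hev]
      refine hL.unique ⟨⟨by omega, ?_⟩, ?_⟩
      · rw [show 2 * (n + 1) + 2 = 2 * (n + 2) by ring, sum_double (n + 2) (by omega)]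
        omega
      · rintro k ⟨hk1, hk2⟩
        omega
end

section
/- Define x_n by x_1 = 4 and, for n ≥ 2, x_n is the smallest integer greater than x_{n-1} with t(x_n) = t(n), where t is the Thue-Morse sequence. Then for every n ≡ 1 (mod 4), x_n ≡ 4 (mod 8) and x_{n+8} - x_n = 16. -/
def tm (m : ℕ) : ℕ := (Nat.digits 2 m).sum % 2

lemma tm_lt (m : ℕ) : tm m < 2 := Nat.mod_lt _ (by norm_num)

lemma tm_odd (m : ℕ) : tm (2*m+1) = (tm m + 1) % 2 := by
  unfold tm
  rw [Nat.digits_def' (by norm_num : (1:ℕ) < 2) (by omega)]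
  have h1 : (2*m+1) % 2 = 1 := by omega
  have h2 : (2*m+1) / 2 = m := by omega
  rw [h1, h2, List.sum_cons]
  omega

lemma tm_even (m : ℕ) : tm (2*m+2) = tm (m+1) := by
  unfold tm
  rw [Nat.digits_def' (by norm_num : (1:ℕ) < 2) (by omega)]
  have h1 : (2*m+2) % 2 = 0 := by omega
  have h2 : (2*m+2) / 2 = m + 1 := by omega
  rw [h1, h2, List.sum_cons, Nat.zero_add]

lemma tm_double (m : ℕ) : tm (2*m) = tm m := by
  cases m with
  | zero => rfl
  | succ k => rw [show 2*(k+1) = 2*k+2 by ring, tm_even]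

lemma tm_mod4 (n : ℕ) (h : n % 4 = 1) : tm (n+1) = tm n := by
  obtain ⟨k, rfl⟩ : ∃ k, n = 4*k+1 := ⟨n/4, by omega⟩
  rw [show 4*k+1+1 = 2*(2*k)+2 by ring, show (4*k+1 : ℕ) = 2*(2*k)+1 by ring,
    tm_even, tm_odd, tm_odd, tm_double]

lemma step_helper (X Y : ℕ) (n : ℕ)
    (hL : IsLeast {m : ℕ | X < m ∧ tm m = tm (n+1)} Y)
    (hxn : X = 2*n+2 ∨ X = 2*n+3) :
    (tm (n+2) = tm (n+1) → Y = 2*(n+1)+2) ∧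
    (tm (n+2) ≠ tm (n+1) → Y = 2*(n+1)+3) := by
  have hlt1 := tm_lt (n+1)
  have hlt2 := tm_lt (n+2)
  constructor
  · intro h2
    refine hL.unique ⟨⟨by omega, ?_⟩, ?_⟩
    · show tm (2*(n+1)+2) = tm (n+1)
      rw [tm_even]; exact h2
    · intro m hm
      obtain ⟨hm1, hm2⟩ := hm
      by_contra hlt
      push_neg at hlt
      have hm3 : m = 2*(n+1)+1 := by rcases hxn with h | h <;> omega
      rw [hm3, tm_odd] at hm2
      omega
  · intro h2
    refine hL.unique ⟨⟨by omega, ?_⟩, ?_⟩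
    · show tm (2*(n+1)+3) = tm (n+1)
      rw [show 2*(n+1)+3 = 2*(n+2)+1 by ring, tm_odd]
      omega
    · intro m hm
      obtain ⟨hm1, hm2⟩ := hm
      by_contra hlt
      push_neg at hlt
      have hm3 : m = 2*(n+1)+1 ∨ m = 2*(n+1)+2 := by rcases hxn with h | h <;> omega
      rcases hm3 with h3 | h3
      · rw [h3, tm_odd] at hm2; omega
      · rw [h3, tm_even] at hm2; exact h2 hm2

/-- For the minimal recursive sequence with `x 1 = 4` w.r.t. the parity of the
binary digit sum (Thue–Morse `t`), if `n ≡ 1 (mod 4)` then `x n ≡ 4 (mod 8)`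
and `x (n+8) - x n = 16`. -/
theorem stmt14 (x : ℕ → ℕ) (h1 : x 1 = 4)
    (hrec : ∀ n, 2 ≤ n →
      IsLeast {m : ℕ | x (n - 1) < m ∧
        (Nat.digits 2 m).sum % 2 = (Nat.digits 2 n).sum % 2} (x n)) :
    ∀ n, 1 ≤ n → n % 4 = 1 → x n % 8 = 4 ∧ x (n + 8) - x n = 16 := by
  have key : ∀ n, 1 ≤ n →
      (tm (n+1) = tm n → x n = 2*n+2) ∧ (tm (n+1) ≠ tm n → x n = 2*n+3) := by
    intro n hn
    induction n, hn using Nat.le_induction with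
    | base =>
      constructor
      · intro _; rw [h1]
      · intro h; exact absurd (tm_mod4 1 rfl) h
    | succ n hn ih =>
      have hxn : x n = 2*n+2 ∨ x n = 2*n+3 := by
        by_cases h : tm (n+1) = tm n
        · exact Or.inl (ih.1 h)
        · exact Or.inr (ih.2 h)
      have hL := hrec (n+1) (by omega)
      rw [Nat.add_sub_cancel] at hL
      exact step_helper (x n) (x (n+1)) n hL hxn
  intro n hn h4
  have e1 : x n = 2*n+2 := (key n hn).1 (tm_mod4 n h4)
  have e2 : x (n+8) = 2*(n+8)+2 := (key (n+8) (by omega)).1 (tm_mod4 (n+8) (by omega))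
  constructor <;> omega
end

section
/- For every odd positive integer n, at least one of t(n+1) = t(n) or t(n+2) = t(n) holds, where t is the Thue-Morse sequence. -/
/-- Every odd positive integer is regular with respect to not-change of the
parity of the binary digit sum: `t (n+1) = t n` or `t (n+2) = t n`. -/
theorem stmt16 (n : ℕ) (hn : 1 ≤ n) (hodd : Odd n) :
    (Nat.digits 2 (n + 1)).sum % 2 = (Nat.digits 2 n).sum % 2 ∨
    (Nat.digits 2 (n + 2)).sum % 2 = (Nat.digits 2 n).sum % 2 := by
  obtain ⟨m, rfl⟩ := hodd
  have h1 : Nat.digits 2 (2 * m + 1) = 1 :: Nat.digits 2 m := by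
    rw [Nat.digits_def' (by norm_num) (by omega)]
    congr 1
    · omega
    · congr 1; omega
  have h2 : Nat.digits 2 (2 * m + 1 + 1) = 0 :: Nat.digits 2 (m + 1) := by
    rw [Nat.digits_def' (by norm_num) (by omega)]
    congr 1
    · omega
    · congr 1; omega
  have h3 : Nat.digits 2 (2 * m + 1 + 2) = 1 :: Nat.digits 2 (m + 1) := by
    rw [Nat.digits_def' (by norm_num) (by omega)]
    congr 1
    · omega
    · congr 1; omega
  rw [h1, h2, h3]
  simp only [List.sum_cons]
  omega
end
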